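/- Let Γ be a simplicial complex with finite p-girth, p ≥ 1. Then for all 0 ≤ k ≤ p, gr_{p−k}(Γ) ≤ gr_p(Γ) − k. -/

import Mathlib

open Finset

/-- An (abstract) simplicial complex on vertex type `V`: a collection of finite
subsets of `V` (the faces) closed under taking subsets. -/
structure SC (V : Type*) where
  faces : Set (Finset V)
  down_closed : ∀ {F G : Finset V}, F ∈ faces → G ⊆ F → G ∈ faces

namespace SC

variable {V : Type*} [LinearOrder V]

/-- The vertex set of a simplicial complex. -/
def vertexSet (K : SC V) : Set V := {v | {v} ∈ K.faces}

/-- The induced subcomplex `K[W]` on a set `W` of vertices. -/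
def restrict (K : SC V) (W : Set V) : SC V where
  faces := {F | F ∈ K.faces ∧ ↑F ⊆ W}
  down_closed := fun hF hGF =>
    ⟨K.down_closed hF.1 hGF, Set.Subset.trans (Finset.coe_subset.mpr hGF) hF.2⟩

/-- The link `lk_K(F)` of a face `F`: all `G` disjoint from `F` with `F ∪ G ∈ K`. -/
def link (K : SC V) (F : Finset V) : SC V where
  faces := {G | Disjoint F G ∧ F ∪ G ∈ K.faces}
  down_closed := fun hG hHG =>
    ⟨hG.1.mono_right (Finset.le_iff_subset.mpr hHG),
      K.down_closed hG.2 (Finset.union_subset_union_right hHG)⟩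

/-- A complex is flag if every set all of whose subsets of cardinality at most 2
are faces is itself a face (equivalently, all minimal non-faces have two vertices). -/
def Flag (K : SC V) : Prop :=
  ∀ F : Finset V, (∀ G ⊆ F, G.card ≤ 2 → G ∈ K.faces) → F ∈ K.faces

/-- The faces of `K` with exactly `n` vertices (i.e. of dimension `n-1`). -/
def faceSet (K : SC V) (n : ℕ) : Set (Finset V) := {F | F ∈ K.faces ∧ F.card = n}

variable (k : Type*) [Field k]

/-- Simplicial `(n-1)`-chains with coefficients in `k`: formal `k`-linear
combinations of faces with `n` vertices.  (`n = 0` corresponds to the empty face,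
used for *reduced* homology.) -/
abbrev Chains (K : SC V) (n : ℕ) := (faceSet K n) →₀ k

/-- The boundary of a single face, with the usual signs determined by the
linear order on the vertices. -/
noncomputable def bdFace (K : SC V) (n : ℕ) (F : faceSet K (n + 1)) : Chains k K n :=
  ∑ v ∈ (F : Finset V).attach,
    ((-1 : k) ^ (((F : Finset V).filter (fun x => x < (v : V))).card)) •
      Finsupp.single (⟨(F : Finset V).erase v,
        K.down_closed F.2.1 (Finset.erase_subset _ _),
        by rw [Finset.card_erase_of_mem v.2, F.2.2]; rfl⟩ : faceSet K n) 1

/-- The simplicial boundary map. -/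
noncomputable def bd (K : SC V) (n : ℕ) : Chains k K (n + 1) →ₗ[k] Chains k K n :=
  Finsupp.lsum k fun F => LinearMap.toSpanSingleton k _ (bdFace k K n F)

/-- The reduced cycles in degree `n - 1` (chains supported on faces with `n` vertices). -/
noncomputable def cycles (K : SC V) : (n : ℕ) → Submodule k (Chains k K n)
  | 0 => ⊤
  | (m + 1) => LinearMap.ker (bd k K m)

/-- The boundaries in degree `n - 1`. -/
noncomputable def boundaries (K : SC V) (n : ℕ) : Submodule k (Chains k K n) :=
  LinearMap.range (bd k K n)

/-- `HNonzero k K n` says that the reduced simplicial homology `H̃_{n-1}(K; k)`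
is nonzero: some reduced cycle on faces with `n` vertices is not a boundary. -/
def HNonzero (K : SC V) (n : ℕ) : Prop := ¬ (cycles k K n ≤ boundaries k K n)

/-- The dimension of the reduced homology `H̃_{n-1}(K; k)` as a `k`-vector space
(for finite complexes): `dim (cycles) - dim (boundaries ∩ cycles)`. -/
noncomputable def homDim (K : SC V) (n : ℕ) : ℕ :=
  Module.finrank k ↥(cycles k K n) -
    Module.finrank k ↥(boundaries k K n ⊓ cycles k K n)

/-- `girth k K p` is the `(p-1)`-girth `gr_{p-1}(K)` over the field `k`: the least
cardinality of a vertex set `W` such that `H̃_{p-1}(lk_K(F)[W]; k) ≠ 0` for some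
face `F` of `K` (including the empty face), or `∞` if there is no such `W`. -/
noncomputable def girth (K : SC V) (p : ℕ) : ℕ∞ :=
  sInf ((fun W : Finset V => (W.card : ℕ∞)) ''
    {W : Finset V | ∃ F ∈ K.faces, HNonzero k ((K.link F).restrict ↑W) p})

/-- A non-returning walk of length `len` in the directed 1-skeleton of `K`:
consecutive vertices span edges, and no three consecutive vertices return
(`v_i ≠ v_{i+2}`) or span a 2-face of `K`. -/
def IsNRWalk (K : SC V) (len : ℕ) (w : ℕ → V) : Prop :=
  (∀ i < len, w i ≠ w (i + 1) ∧ ({w i, w (i + 1)} : Finset V) ∈ K.faces) ∧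
  (∀ i, i + 2 ≤ len → w i ≠ w (i + 2) ∧ ({w i, w (i + 1), w (i + 2)} : Finset V) ∉ K.faces)

end SC
namespace SC

variable {V : Type*} [LinearOrder V] (k : Type*) [Field k]

set_option linter.unusedSectionVars false

theorem ext' {A B : SC V} (h : A.faces = B.faces) : A = B := by
  cases A; cases B; cases h; rfl

/-- Inclusion of face sets. -/
def faceIncl {M L : SC V} (h : M.faces ⊆ L.faces) (n : ℕ) (F : faceSet M n) :
    faceSet L n := ⟨F.1, h F.2.1, F.2.2⟩

theorem faceIncl_injective {M L : SC V} (h : M.faces ⊆ L.faces) (n : ℕ) :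
    Function.Injective (faceIncl h n) := by
  intro F G hFG
  simpa [faceIncl, Subtype.ext_iff] using hFG

/-- The chain map induced by an inclusion of complexes. -/
noncomputable def chmap {M L : SC V} (h : M.faces ⊆ L.faces) (n : ℕ) :
    Chains k M n →ₗ[k] Chains k L n := Finsupp.lmapDomain k k (faceIncl h n)

theorem chmap_single {M L : SC V} (h : M.faces ⊆ L.faces) (n : ℕ)
    (F : faceSet M n) (c : k) :
    chmap k h n (Finsupp.single F c) = Finsupp.single (faceIncl h n F) c := by
  simp [chmap, Finsupp.mapDomain_single]

theorem chmap_injective {M L : SC V} (h : M.faces ⊆ L.faces) (n : ℕ) :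
    Function.Injective (chmap k h n) := by
  intro x y hxy
  exact Finsupp.mapDomain_injective (faceIncl_injective h n) hxy

theorem bd_single {L : SC V} (n : ℕ) (F : faceSet L (n+1)) (c : k) :
    bd k L n (Finsupp.single F c) = c • bdFace k L n F := by
  simp [bd, Finsupp.lsum_single, LinearMap.toSpanSingleton_apply]

theorem chmap_bdFace {M L : SC V} (h : M.faces ⊆ L.faces) (n : ℕ)
    (F : faceSet M (n+1)) :
    chmap k h n (bdFace k M n F) = bdFace k L n (faceIncl h (n+1) F) := by
  rw [bdFace, map_sum]
  refine Finset.sum_congr rfl fun v _ => ?_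
  rw [map_smul, chmap_single]
  rfl

theorem chmap_bd {M L : SC V} (h : M.faces ⊆ L.faces) (n : ℕ)
    (x : Chains k M (n+1)) :
    chmap k h n (bd k M n x) = bd k L n (chmap k h (n+1) x) := by
  induction x using Finsupp.induction_linear with
  | zero => simp
  | add f g hf hg => simp [map_add, hf, hg]
  | single F c =>
      rw [bd_single, map_smul, chmap_bdFace, chmap_single, bd_single]

end SC
namespace SC

variable {V : Type*} [LinearOrder V] (k : Type*) [Field k]

set_option linter.unusedSectionVars false

/-- A single term of the boundary of a face, as a total function. -/
noncomputable def bdTerm (L : SC V) (n : ℕ) (F : faceSet L (n + 1)) (u : V) :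
    Chains k L n :=
  if h : u ∈ F.1 then
    ((-1 : k) ^ ((F.1.filter (fun x => x < u)).card)) •
      Finsupp.single (⟨F.1.erase u, L.down_closed F.2.1 (Finset.erase_subset _ _),
        by rw [Finset.card_erase_of_mem h, F.2.2]; rfl⟩ : faceSet L n) 1
  else 0

theorem bdFace_eq_sum (L : SC V) (n : ℕ) (F : faceSet L (n + 1)) :
    bdFace k L n F = ∑ u ∈ F.1, bdTerm k L n F u := by
  rw [bdFace, ← Finset.sum_attach F.1 (bdTerm k L n F)]
  exact Finset.sum_congr rfl fun u _ => by rw [bdTerm, dif_pos u.2]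

variable (L : SC V) (v : V)

theorem link_subset : (L.link {v}).faces ⊆ L.faces := fun G hG =>
  L.down_closed hG.2 Finset.subset_union_right

theorem delV_subset : (L.restrict {x | x ≠ v}).faces ⊆ L.faces := fun G hG => hG.1

theorem link_subset_delV : (L.link {v}).faces ⊆ (L.restrict {x | x ≠ v}).faces :=
  fun G hG => ⟨link_subset L v hG, by
    intro x hx
    have hd : Disjoint ({v} : Finset V) G := hG.1
    have : x ∈ G := hx
    intro hxv
    subst hxv
    exact (Finset.disjoint_singleton_left.mp hd) this⟩

theorem not_mem_of_link {G : Finset V} (hG : G ∈ (L.link {v}).faces) : v ∉ G :=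
  Finset.disjoint_singleton_left.mp hG.1

/-- Coning a face of the link with `v`. -/
def coneFace (n : ℕ) (G : faceSet (L.link {v}) n) : faceSet L (n + 1) :=
  ⟨insert v G.1,
    by rw [Finset.insert_eq]; exact G.2.1.2,
    by rw [Finset.card_insert_of_notMem (not_mem_of_link L v G.2.1), G.2.2]⟩

/-- The cone map on chains. -/
noncomputable def cone (n : ℕ) :
    Chains k (L.link {v}) n →ₗ[k] Chains k L (n + 1) :=
  Finsupp.lsum k fun G => LinearMap.toSpanSingleton k _
    (((-1 : k) ^ ((G.1.filter (fun x => x < v)).card)) •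
      Finsupp.single (coneFace L v n G) 1)

theorem cone_single (n : ℕ) (G : faceSet (L.link {v}) n) (c : k) :
    cone k L v n (Finsupp.single G c) =
      (c * (-1 : k) ^ ((G.1.filter (fun x => x < v)).card)) •
        Finsupp.single (coneFace L v n G) 1 := by
  simp [cone, Finsupp.lsum_single, LinearMap.toSpanSingleton_apply, smul_smul]

/-- Removing `v` from a face containing it, landing in the link. -/
def dropFace (n : ℕ) (F : faceSet L (n + 1)) (h : v ∈ F.1) :
    faceSet (L.link {v}) n :=
  ⟨F.1.erase v,
    ⟨Finset.disjoint_singleton_left.mpr (Finset.notMem_erase v F.1),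
      by rw [← Finset.insert_eq, Finset.insert_erase h]; exact F.2.1⟩,
    by rw [Finset.card_erase_of_mem h, F.2.2]; rfl⟩

/-- The `v`-part of a chain: faces containing `v`, with `v` removed (with sign). -/
noncomputable def vpart (n : ℕ) :
    Chains k L (n + 1) →ₗ[k] Chains k (L.link {v}) n :=
  Finsupp.lsum k fun F => LinearMap.toSpanSingleton k _
    (if h : v ∈ F.1 then
      ((-1 : k) ^ (((F.1.erase v).filter (fun x => x < v)).card)) •
        Finsupp.single (dropFace L v n F h) 1
    else 0)

theorem vpart_single (n : ℕ) (F : faceSet L (n + 1)) (c : k) :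
    vpart k L v n (Finsupp.single F c) =
      if h : v ∈ F.1 then
        (c * (-1 : k) ^ (((F.1.erase v).filter (fun x => x < v)).card)) •
          Finsupp.single (dropFace L v n F h) 1
      else 0 := by
  by_cases h : v ∈ F.1 <;>
    simp [vpart, Finsupp.lsum_single, LinearMap.toSpanSingleton_apply, h, smul_smul]

/-- The part of a face avoiding `v`, as a face of the deletion. -/
def restFace (n : ℕ) (F : faceSet L n) (h : v ∉ F.1) :
    faceSet (L.restrict {x | x ≠ v}) n :=
  ⟨F.1, ⟨F.2.1, fun x hx hxv => h (by subst hxv; exact hx)⟩, F.2.2⟩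

/-- The non-`v` part of a chain. -/
noncomputable def rest (n : ℕ) :
    Chains k L n →ₗ[k] Chains k (L.restrict {x | x ≠ v}) n :=
  Finsupp.lsum k fun F => LinearMap.toSpanSingleton k _
    (if h : v ∈ F.1 then 0 else Finsupp.single (restFace L v n F h) 1)

theorem rest_single (n : ℕ) (F : faceSet L n) (c : k) :
    rest k L v n (Finsupp.single F c) =
      if h : v ∈ F.1 then 0 else Finsupp.single (restFace L v n F h) c := by
  by_cases h : v ∈ F.1 <;>
    simp [rest, Finsupp.lsum_single, LinearMap.toSpanSingleton_apply, h,
      Finsupp.smul_single]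

end SC
namespace SC

variable {V : Type*} [LinearOrder V] (k : Type*) [Field k]

set_option linter.unusedSectionVars false

theorem neg_one_sq_pow (m : ℕ) : (-1 : k) ^ m * (-1 : k) ^ m = 1 := by
  rw [← pow_add]
  exact Even.neg_one_pow ⟨m, rfl⟩

variable (L : SC V) (v : V)

theorem chmap_chmap {M N : SC V} (h1 : M.faces ⊆ N.faces) (h2 : N.faces ⊆ L.faces)
    (n : ℕ) (x : Chains k M n) :
    chmap k h2 n (chmap k h1 n x) = chmap k (h1.trans h2) n x := by
  induction x using Finsupp.induction_linear with
  | zero => simp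
  | add f g hf hg => simp only [map_add, hf, hg]
  | single F c =>
      rw [chmap_single, chmap_single, chmap_single]
      exact congrArg (fun X => Finsupp.single X c) (Subtype.ext rfl)

theorem decomp (n : ℕ) (x : Chains k L (n + 1)) :
    x = cone k L v n (vpart k L v n x)
      + chmap k (delV_subset L v) (n + 1) (rest k L v (n + 1) x) := by
  induction x using Finsupp.induction_linear with
  | zero => simp
  | add f g hf hg =>
      simp only [map_add]
      conv_lhs => rw [hf, hg]
      abel
  | single F c =>
      by_cases h : v ∈ F.1
      · have hface : coneFace L v n (dropFace L v n F h) = F :=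
          Subtype.ext (Finset.insert_erase h)
        rw [vpart_single, dif_pos h, rest_single, dif_pos h, map_zero, add_zero,
          map_smul, cone_single, hface, smul_smul, one_mul,
          show (dropFace L v n F h).1 = F.1.erase v from rfl, mul_assoc,
          neg_one_sq_pow, mul_one, Finsupp.smul_single, smul_eq_mul, mul_one]
      · have hface : faceIncl (delV_subset L v) (n + 1) (restFace L v (n + 1) F h) = F :=
          Subtype.ext rfl
        rw [vpart_single, dif_neg h, rest_single, dif_neg h, map_zero, zero_add,
          chmap_single, hface]

theorem vpart_cone (n : ℕ) (y : Chains k (L.link {v}) n) :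
    vpart k L v n (cone k L v n y) = y := by
  induction y using Finsupp.induction_linear with
  | zero => simp
  | add f g hf hg => simp only [map_add, hf, hg]
  | single G c =>
      have hv : v ∉ G.1 := not_mem_of_link L v G.2.1
      have hmem : v ∈ (coneFace L v n G).1 := Finset.mem_insert_self v G.1
      have hface : dropFace L v n (coneFace L v n G) hmem = G :=
        Subtype.ext (Finset.erase_insert hv)
      rw [cone_single, map_smul, vpart_single, dif_pos hmem, hface]
      have hex : ((coneFace L v n G).1.erase v) = G.1 := Finset.erase_insert hv
      rw [hex, smul_smul, one_mul, mul_assoc, neg_one_sq_pow, mul_one,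
        Finsupp.smul_single, smul_eq_mul, mul_one]

theorem vpart_chmap {M : SC V} (h : M.faces ⊆ L.faces) (hM : ∀ F ∈ M.faces, v ∉ F)
    (n : ℕ) (x : Chains k M (n + 1)) :
    vpart k L v n (chmap k h (n + 1) x) = 0 := by
  induction x using Finsupp.induction_linear with
  | zero => simp
  | add f g hf hg => simp only [map_add, hf, hg, add_zero]
  | single F c =>
      rw [chmap_single, vpart_single,
        dif_neg (show v ∉ (faceIncl h (n + 1) F).1 from hM F.1 F.2.1)]

theorem sign_cancel {u : V} {G : Finset V} (hu : u ∈ G) (hv : v ∉ G) :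
    (-1 : k) ^ ((G.filter (fun x => x < v)).card) *
        (-1 : k) ^ (((insert v G).filter (fun x => x < u)).card) +
      (-1 : k) ^ ((G.filter (fun x => x < u)).card) *
        (-1 : k) ^ (((G.erase u).filter (fun x => x < v)).card) = 0 := by
  have hne : u ≠ v := fun h => hv (h ▸ hu)
  rw [Finset.filter_insert, Finset.filter_erase]
  rcases hne.lt_or_gt with hlt | hlt
  · -- u < v
    rw [if_neg (asymm hlt)]
    have humem : u ∈ G.filter (fun x => x < v) := Finset.mem_filter.mpr ⟨hu, hlt⟩
    rw [Finset.card_erase_of_mem humem]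
    have hpos : 0 < (G.filter (fun x => x < v)).card := Finset.card_pos.mpr ⟨u, humem⟩
    obtain ⟨a, ha⟩ := Nat.exists_eq_add_of_lt hpos
    rw [ha]
    simp only [Nat.add_sub_cancel, zero_add]
    rw [pow_succ]
    ring
  · -- v < u
    rw [if_pos hlt]
    have hvnot : v ∉ G.filter (fun x => x < u) := fun hmem => hv (Finset.mem_filter.mp hmem).1
    rw [Finset.card_insert_of_notMem hvnot]
    have hunot : u ∉ G.filter (fun x => x < v) := fun hmem =>
      (asymm hlt) (Finset.mem_filter.mp hmem).2
    rw [Finset.erase_eq_of_notMem hunot, pow_succ]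
    ring

end SC
namespace SC

variable {V : Type*} [LinearOrder V] (k : Type*) [Field k]

set_option linter.unusedSectionVars false

variable (L : SC V) (v : V)

theorem cone_bd (n : ℕ) (x : Chains k (L.link {v}) (n + 1)) :
    bd k L (n + 1) (cone k L v (n + 1) x) =
      chmap k (link_subset L v) (n + 1) x - cone k L v n (bd k (L.link {v}) n x) := by
  induction x using Finsupp.induction_linear with
  | zero => simp
  | add f g hf hg => simp only [map_add, hf, hg]; abel
  | single G c =>
    have hv : v ∉ G.1 := not_mem_of_link L v G.2.1
    have hmem : v ∈ (coneFace L v (n + 1) G).1 := Finset.mem_insert_self v G.1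
    -- the boundary of the coned face, split into the v-term and the rest
    have hsum : bdFace k L (n + 1) (coneFace L v (n + 1) G) =
        bdTerm k L (n + 1) (coneFace L v (n + 1) G) v +
          ∑ u ∈ G.1, bdTerm k L (n + 1) (coneFace L v (n + 1) G) u := by
      rw [bdFace_eq_sum]
      exact Finset.sum_insert hv
    -- the v-term gives back the original face
    have hA : bdTerm k L (n + 1) (coneFace L v (n + 1) G) v =
        ((-1 : k) ^ ((G.1.filter (fun x => x < v)).card)) •
          Finsupp.single (faceIncl (link_subset L v) (n + 1) G) 1 := by
      rw [bdTerm, dif_pos hmem]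
      have e1 : ((coneFace L v (n + 1) G).1.filter (fun x => x < v)).card =
          (G.1.filter (fun x => x < v)).card := by
        rw [show (coneFace L v (n + 1) G).1 = insert v G.1 from rfl,
          Finset.filter_insert, if_neg (lt_irrefl v)]
      rw [e1]
      exact congrArg _ (congrArg (fun X => Finsupp.single X (1 : k))
        (Subtype.ext (Finset.erase_insert hv)))
    -- the other terms cancel pairwise against the cone of the boundary
    have hB : ∀ u ∈ G.1,
        (c * (-1 : k) ^ ((G.1.filter (fun x => x < v)).card)) •
            bdTerm k L (n + 1) (coneFace L v (n + 1) G) u +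
          c • cone k L v n (bdTerm k (L.link {v}) n G u) = 0 := by
      intro u hu
      have hne : v ≠ u := fun h => hv (h ▸ hu)
      have hmemu : u ∈ (coneFace L v (n + 1) G).1 := Finset.mem_insert_of_mem hu
      rw [bdTerm, dif_pos hmemu, bdTerm, dif_pos hu, map_smul, cone_single]
      have hface : coneFace L v n (⟨G.1.erase u,
            (L.link {v}).down_closed G.2.1 (Finset.erase_subset _ _),
            by rw [Finset.card_erase_of_mem hu, G.2.2]; rfl⟩ : faceSet (L.link {v}) n) =
          (⟨(coneFace L v (n + 1) G).1.erase u,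
            L.down_closed (coneFace L v (n + 1) G).2.1 (Finset.erase_subset _ _),
            by rw [Finset.card_erase_of_mem hmemu, (coneFace L v (n + 1) G).2.2]; rfl⟩ :
              faceSet L (n + 1)) :=
        Subtype.ext (Finset.erase_insert_of_ne hne).symm
      rw [hface]
      simp only [smul_smul, one_mul]
      rw [← add_smul]
      refine smul_eq_zero_of_left ?_ _
      have hs := sign_cancel (u := u) (G := G.1) k v hu hv
      simp only [coneFace]
      linear_combination c * hs
    rw [cone_single, map_smul, bd_single, one_smul, chmap_single, bd_single, map_smul,
      hsum, smul_add, hA, smul_smul, mul_assoc, neg_one_sq_pow, mul_one,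
      Finsupp.smul_single, smul_eq_mul, mul_one, Finset.smul_sum,
      bdFace_eq_sum, map_sum, Finset.smul_sum, eq_sub_iff_add_eq, add_assoc]
    have hzero := Finset.sum_eq_zero hB
    rw [Finset.sum_add_distrib] at hzero
    rw [hzero, add_zero]

end SC
namespace SC

variable {V : Type*} [LinearOrder V] (k : Type*) [Field k]

set_option linter.unusedSectionVars false

/-- The key Mayer–Vietoris style step: if `H̃` of `L` is nonzero in degree `n`
and `H̃` of the deletion of `v` vanishes there, then `H̃` of the link of `v`
is nonzero one degree lower. -/
theorem step (L : SC V) (n : ℕ) (hn : 1 ≤ n) (hz : HNonzero k L (n + 1)) :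
    ∃ v : V, {v} ∈ L.faces ∧
      ((cycles k (L.restrict {x | x ≠ v}) (n + 1) ≤
          boundaries k (L.restrict {x | x ≠ v}) (n + 1)) →
        HNonzero k (L.link {v}) n) := by
  obtain ⟨m, rfl⟩ : ∃ m, n = m + 1 := ⟨n - 1, (Nat.succ_pred_eq_of_pos hn).symm⟩
  rw [HNonzero, SetLike.not_le_iff_exists] at hz
  obtain ⟨z, hzc, hznb⟩ := hz
  have hz0 : z ≠ 0 := fun h => hznb (h ▸ (boundaries k L (m + 1 + 1)).zero_mem)
  obtain ⟨F₀, hF₀⟩ := Finsupp.support_nonempty_iff.mpr hz0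
  have hcard : F₀.1.card = m + 2 := F₀.2.2
  obtain ⟨v, hvF₀⟩ := Finset.card_pos.mp (by rw [hcard]; omega)
  refine ⟨v, L.down_closed F₀.2.1 (Finset.singleton_subset_iff.mpr hvF₀), fun hd => ?_⟩
  have hbdz : bd k L (m + 1) z = 0 := hzc
  set a : Chains k (L.link {v}) (m + 1) := vpart k L v (m + 1) z with ha
  -- a is a cycle
  have hbda : bd k (L.link {v}) m a = 0 := by
    have h0 : bd k L (m + 1) (cone k L v (m + 1) a)
        + bd k L (m + 1)
            (chmap k (delV_subset L v) (m + 1 + 1) (rest k L v (m + 1 + 1) z)) = 0 := by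
      rw [← map_add, ← decomp]; exact hbdz
    rw [cone_bd, ← chmap_bd] at h0
    have h1 := congrArg (vpart k L v m) h0
    rw [map_zero, map_add, map_sub, vpart_chmap k L v (link_subset L v)
        (fun F hF => not_mem_of_link L v hF), vpart_cone,
      vpart_chmap k L v (delV_subset L v)
        (fun F hF hx => hF.2 (Finset.mem_coe.mpr hx) rfl), zero_sub,
      add_zero, neg_eq_zero] at h1
    exact h1
  -- a is not a boundary
  rw [HNonzero, SetLike.not_le_iff_exists]
  refine ⟨a, hbda, fun hab => ?_⟩
  obtain ⟨c, hc⟩ := hab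
  set zdd : Chains k (L.restrict {x | x ≠ v}) (m + 1 + 1) :=
    rest k L v (m + 1 + 1) z + chmap k (link_subset_delV L v) (m + 1 + 1) c with hzdd
  have hrew : chmap k (delV_subset L v) (m + 1 + 1)
      (chmap k (link_subset_delV L v) (m + 1 + 1) c)
      = chmap k (link_subset L v) (m + 1 + 1) c := by
    rw [chmap_chmap]
  have h2 : chmap k (delV_subset L v) (m + 1 + 1) (rest k L v (m + 1 + 1) z)
      = z - cone k L v (m + 1) a := by
    have hdec := decomp k L v (m + 1) z
    rw [← ha] at hdec
    conv_rhs => rw [hdec]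
    abel
  have hbdrest : bd k L (m + 1)
      (chmap k (delV_subset L v) (m + 1 + 1) (rest k L v (m + 1 + 1) z))
      = - chmap k (link_subset L v) (m + 1) a := by
    rw [h2, map_sub, hbdz, cone_bd, hbda, map_zero, sub_zero, zero_sub]
  have hbdzdd : bd k (L.restrict {x | x ≠ v}) (m + 1) zdd = 0 := by
    apply chmap_injective k (delV_subset L v) (m + 1)
    rw [chmap_bd, map_zero, hzdd, map_add, hrew, map_add, hbdrest, ← chmap_bd, hc]
    abel
  obtain ⟨d, hdd⟩ := hd hbdzdd
  -- now z is a boundary, contradiction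
  apply hznb
  have hconec : cone k L v (m + 1) a
      = chmap k (link_subset L v) (m + 1 + 1) c
        - bd k L (m + 1 + 1) (cone k L v (m + 1 + 1) c) := by
    rw [cone_bd, hc]; abel
  refine ⟨chmap k (delV_subset L v) (m + 1 + 1 + 1) d - cone k L v (m + 1 + 1) c, ?_⟩
  rw [map_sub, ← chmap_bd, hdd, hzdd, map_add, hrew]
  have hdec := decomp k L v (m + 1) z
  rw [← ha, hconec] at hdec
  conv_rhs => rw [hdec]
  abel

end SC
namespace SC

variable {V : Type*} [LinearOrder V] (k : Type*) [Field k]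

set_option linter.unusedSectionVars false

theorem restrict_restrict (K : SC V) (F : Finset V) (W : Finset V) (v : V) :
    ((K.link F).restrict ↑W).restrict {x | x ≠ v}
      = (K.link F).restrict ↑(W.erase v) := by
  apply ext'
  ext G
  simp only [restrict, Set.mem_setOf_eq, Finset.coe_erase, Set.subset_def,
    Set.mem_diff, Set.mem_singleton_iff, Finset.mem_coe]
  constructor
  · rintro ⟨⟨h1, h2⟩, h3⟩
    exact ⟨h1, fun x hx => ⟨h2 x hx, h3 x hx⟩⟩
  · rintro ⟨h1, h2⟩
    exact ⟨⟨h1, fun x hx => (h2 x hx).1⟩, fun x hx => (h2 x hx).2⟩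

theorem link_restrict_link (K : SC V) (F : Finset V) (W : Finset V) (v : V)
    (hvW : v ∈ W) (hvF : v ∉ F) :
    ((K.link F).restrict ↑W).link {v}
      = (K.link (F ∪ {v})).restrict ↑(W.erase v) := by
  apply ext'
  ext G
  show (Disjoint {v} G ∧ _) ↔ _
  constructor
  · rintro ⟨hdisj, ⟨hd2, hmem⟩, hsub⟩
    have hvG : v ∉ G := Finset.disjoint_singleton_left.mp hdisj
    refine ⟨⟨?_, ?_⟩, ?_⟩
    · rw [Finset.disjoint_union_left, Finset.disjoint_singleton_left]
      constructor
      · exact hd2.mono_right Finset.subset_union_right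
      · exact hvG
    · rw [Finset.union_assoc]; exact hmem
    · intro x hx
      simp only [Finset.coe_erase, Set.mem_diff, Set.mem_singleton_iff]
      have hxG : x ∈ G := Finset.mem_coe.mp hx
      refine ⟨hsub (Finset.mem_coe.mpr (Finset.mem_union_right _ hxG)), ?_⟩
      rintro rfl; exact hvG hxG
  · rintro ⟨⟨hdisj, hmem⟩, hsub⟩
    rw [Finset.disjoint_union_left, Finset.disjoint_singleton_left] at hdisj
    refine ⟨Finset.disjoint_singleton_left.mpr hdisj.2, ⟨?_, ?_⟩, ?_⟩
    · rw [Finset.disjoint_union_right, Finset.disjoint_singleton_right]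
      exact ⟨hvF, hdisj.1⟩
    · rwa [← Finset.union_assoc]
    · intro x hx
      rcases Finset.mem_union.mp (Finset.mem_coe.mp hx) with h | h
      · rw [Finset.mem_singleton.mp h]; exact Finset.mem_coe.mpr hvW
      · have := hsub (Finset.mem_coe.mpr h)
        simp only [Finset.coe_erase, Set.mem_diff, Set.mem_singleton_iff] at this
        exact Finset.mem_coe.mpr this.1

/-- A minimal witness for a finite girth. -/
theorem girth_exists (K : SC V) (p : ℕ) (h : girth k K p ≠ ⊤) :
    ∃ W : Finset V, (∃ F ∈ K.faces, HNonzero k ((K.link F).restrict ↑W) p) ∧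
      girth k K p = (W.card : ℕ∞) ∧
      ∀ W' : Finset V, (∃ F ∈ K.faces, HNonzero k ((K.link F).restrict ↑W') p) →
        W.card ≤ W'.card := by
  set S := {W : Finset V | ∃ F ∈ K.faces, HNonzero k ((K.link F).restrict ↑W) p} with hS
  have hne : S.Nonempty := by
    by_contra hcon
    rw [Set.not_nonempty_iff_eq_empty] at hcon
    apply h
    rw [girth, hS] at *
    rw [hcon, Set.image_empty, sInf_empty]
  set T := {n : ℕ | ∃ W ∈ S, W.card = n} with hT
  have hTne : T.Nonempty := ⟨hne.choose.card, hne.choose, hne.choose_spec, rfl⟩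
  obtain ⟨W, hWS, hWcard⟩ := Nat.sInf_mem hTne
  have hmin : ∀ W' : Finset V,
      (∃ F ∈ K.faces, HNonzero k ((K.link F).restrict ↑W') p) → W.card ≤ W'.card := by
    intro W' hW'
    rw [hWcard]
    exact Nat.sInf_le ⟨W', hW', rfl⟩
  refine ⟨W, hWS, le_antisymm ?_ ?_, hmin⟩
  · exact sInf_le ⟨W, hWS, rfl⟩
  · apply le_sInf
    rintro b ⟨W2, hW2, rfl⟩
    exact_mod_cast Nat.cast_le.mpr (hmin W2 hW2)

theorem one_step (K : SC V) (m : ℕ) (hm : 1 ≤ m) (h : girth k K (m + 1) ≠ ⊤) :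
    girth k K m ≤ girth k K (m + 1) - 1 := by
  obtain ⟨W, ⟨F, hF, hH⟩, hgw, hmin⟩ := girth_exists k K (m + 1) h
  obtain ⟨v, hvL, himp⟩ := step k ((K.link F).restrict ↑W) m hm hH
  have hvW : v ∈ W := by
    have := hvL.2 (Finset.mem_coe.mpr (Finset.mem_singleton_self v))
    exact Finset.mem_coe.mp this
  have hvF : v ∉ F := Finset.disjoint_singleton_right.mp hvL.1.1
  have hcard1 : 1 ≤ W.card := Finset.card_pos.mpr ⟨v, hvW⟩
  have hle : cycles k (((K.link F).restrict ↑W).restrict {x | x ≠ v}) (m + 1) ≤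
      boundaries k (((K.link F).restrict ↑W).restrict {x | x ≠ v}) (m + 1) := by
    by_contra hcon
    have hH' : HNonzero k ((K.link F).restrict ↑(W.erase v)) (m + 1) := by
      rw [← restrict_restrict]; exact hcon
    have := hmin (W.erase v) ⟨F, hF, hH'⟩
    rw [Finset.card_erase_of_mem hvW] at this
    omega
  have hH2 : HNonzero k ((K.link (F ∪ {v})).restrict ↑(W.erase v)) m := by
    rw [← link_restrict_link K F W v hvW hvF]
    exact himp hle
  have hFv : F ∪ {v} ∈ K.faces := hvL.1.2
  have hgle : girth k K m ≤ ((W.erase v).card : ℕ∞) :=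
    sInf_le ⟨W.erase v, ⟨F ∪ {v}, hFv, hH2⟩, rfl⟩
  rw [Finset.card_erase_of_mem hvW] at hgle
  rw [hgw]
  refine le_trans hgle ?_
  rw [ENat.coe_sub, Nat.cast_one]

end SC

/-- If `gr_p(K) < ∞` and `p ≥ 1`, then for all `0 ≤ j ≤ p`,
`gr_{p-j}(K) ≤ gr_p(K) - j`.  (Here `SC.girth k K (q+1)` is `gr_q(K)`.) -/
theorem girth_sub_le {V : Type*} [LinearOrder V] (k : Type*) [Field k]
    (K : SC V) (p : ℕ) (hp : 1 ≤ p) (hfin : SC.girth k K (p + 1) ≠ ⊤) :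
    ∀ j ≤ p, SC.girth k K (p + 1 - j) ≤ SC.girth k K (p + 1) - (j : ℕ∞) := by
  intro j hj
  induction j with
  | zero => simp
  | succ i ih =>
    have hip : i ≤ p := Nat.le_of_succ_le hj
    have ih' := ih hip
    have h1 : p + 1 - i = (p - i) + 1 := by omega
    have h2 : p + 1 - (i + 1) = p - i := by omega
    have hmge : 1 ≤ p - i := by omega
    have hfin' : SC.girth k K ((p - i) + 1) ≠ ⊤ := by
      rw [← h1]
      intro hcon
      rw [hcon, top_le_iff] at ih'
      exact hfin (top_le_iff.mp (le_trans (le_of_eq ih'.symm) tsub_le_self))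
    have hstep := SC.one_step k K (p - i) hmge hfin'
    rw [← h1] at hstep
    rw [h2]
    refine le_trans hstep ?_
    refine le_trans (tsub_le_tsub_right ih' 1) ?_
    rw [tsub_tsub, show ((i : ℕ∞) + 1) = ((i + 1 : ℕ) : ℕ∞) by push_cast; ring]
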